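/- Fix an integer r ≥ 3. For every ε > 0 there exists m₀ such that for all integers m ≥ m₀ the following holds: there exist real coefficients α₁,…,α_{r−1} such that (i) each row s₁,…,s_r of A(m) satisfies the linear inequality Σ_{i=1}^{r−1} Σ_{j∈L(i)} α_i·ξ_j ≤ Σ_{i=1}^{r−1} α_i·σ(i) with equality, and (ii) the number of 0/1 vectors (ξ₁,…,ξ_M) ∈ {0,1}^M satisfying this inequality is at most 2^{(H_r + ε)·M}. -/

import Mathlib

open Filter
open scoped BigOperators

/-- The binary entropy function `h(ξ) = ξ log₂(1/ξ) + (1-ξ) log₂(1/(1-ξ))`. -/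
noncomputable def binEnt (x : ℝ) : ℝ :=
  x * Real.logb 2 x⁻¹ + (1 - x) * Real.logb 2 (1 - x)⁻¹

/-- `H_r = (1/(2^r-2)) ∑_{i=1}^{r-1} C(r,i) h(i/r)`. -/
noncomputable def Hent (r : ℕ) : ℝ :=
  (1 / ((2 : ℝ) ^ r - 2)) * ∑ i ∈ Finset.Icc 1 (r - 1), (r.choose i : ℝ) * binEnt ((i : ℝ) / r)

/-- The number of ones of a 0/1 vector. -/
def ones {r : ℕ} (v : Fin r → Bool) : ℕ := (Finset.univ.filter fun i => v i = true).card

lemma ones_le {r : ℕ} (v : Fin r → Bool) : ones v ≤ r := by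
  simpa [ones] using Finset.card_filter_le Finset.univ fun i => v i = true

lemma ones_eq_zero_iff {r : ℕ} (v : Fin r → Bool) : ones v = 0 ↔ v = fun _ => false := by
  unfold ones
  rw [Finset.card_eq_zero, Finset.filter_eq_empty_iff]
  constructor
  · intro h; funext i
    have := h (Finset.mem_univ i); simpa using this
  · intro h i _; simp [h]

lemma ones_eq_top_iff {r : ℕ} (v : Fin r → Bool) : ones v = r ↔ v = fun _ => true := by
  constructor
  · intro h
    have huniv : Finset.univ.filter (fun i => v i = true) = Finset.univ :=
      Finset.eq_univ_of_card _ (by simpa [ones] using h)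
    funext i
    have : i ∈ Finset.univ.filter (fun i => v i = true) := by
      rw [huniv]; exact Finset.mem_univ i
    exact (Finset.mem_filter.mp this).2
  · intro h
    simp [ones, h]

lemma count_ones (r k : ℕ) :
    (Finset.univ.filter fun v : Fin r → Bool => ones v = k).card = r.choose k := by
  classical
  rw [show r.choose k = ((Finset.univ : Finset (Fin r)).powersetCard k).card by
    simp [Finset.card_powersetCard]]
  refine Finset.card_bij' (fun v _ => Finset.univ.filter fun t => v t = true)
    (fun s _ => fun t => decide (t ∈ s)) ?_ ?_ ?_ ?_
  · intro v hv
    rw [Finset.mem_powersetCard]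
    exact ⟨Finset.subset_univ _, by simpa [ones] using (Finset.mem_filter.mp hv).2⟩
  · intro s hs
    rw [Finset.mem_powersetCard] at hs
    simp only [Finset.mem_filter, Finset.mem_univ, true_and]
    rw [← hs.2]
    unfold ones
    congr 1
    ext t; simp
  · intro v _; funext t; simp
  · intro s _; ext t; simp

lemma count_ones_true (r k : ℕ) (i : Fin r) (hk : 1 ≤ k) :
    (Finset.univ.filter fun v : Fin r → Bool => ones v = k ∧ v i = true).card
      = (r - 1).choose (k - 1) := by
  classical
  rw [show (r-1).choose (k-1) = (((Finset.univ : Finset (Fin r)).erase i).powersetCard (k-1)).card by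
    simp [Finset.card_powersetCard, Finset.card_erase_of_mem]]
  refine Finset.card_bij' (fun v _ => (Finset.univ.filter fun t => v t = true).erase i)
    (fun s _ => fun t => decide (t ∈ insert i s)) ?_ ?_ ?_ ?_
  · intro v hv
    rw [Finset.mem_powersetCard]
    rw [Finset.mem_filter] at hv
    refine ⟨Finset.erase_subset_erase _ (Finset.subset_univ _), ?_⟩
    rw [Finset.card_erase_of_mem (by simp [hv.2.2])]
    simp [ones] at hv
    omega
  · intro s hs
    rw [Finset.mem_powersetCard] at hs
    have hins : i ∉ s := fun h => (Finset.mem_erase.mp (hs.1 h)).1 rfl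
    simp only [Finset.mem_filter, Finset.mem_univ, true_and]
    constructor
    · show ones (fun t => decide (t ∈ insert i s)) = k
      have : (Finset.univ.filter fun t => decide (t ∈ insert i s) = true) = insert i s := by
        ext t; simp
      rw [ones, this, Finset.card_insert_of_notMem hins, hs.2]
      omega
    · simp
  · intro v hv
    rw [Finset.mem_filter] at hv
    funext t
    have : insert i ((Finset.univ.filter fun t => v t = true).erase i)
        = Finset.univ.filter fun t => v t = true :=
      Finset.insert_erase (by simp [hv.2.2])
    show decide (t ∈ insert i ((Finset.univ.filter fun t => v t = true).erase i)) = v t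
    rw [this]; simp
  · intro s hs
    rw [Finset.mem_powersetCard] at hs
    have hins : i ∉ s := fun h => (Finset.mem_erase.mp (hs.1 h)).1 rfl
    have : (Finset.univ.filter fun t => decide (t ∈ insert i s) = true) = insert i s := by
      ext t; simp
    show (Finset.univ.filter fun t => decide (t ∈ insert i s) = true).erase i = s
    rw [this, Finset.erase_insert hins]

lemma rpow_finset_sum {α : Type*} (s : Finset α) (f : α → ℝ) :
    (2:ℝ) ^ (∑ x ∈ s, f x) = ∏ x ∈ s, (2:ℝ) ^ f x := by
  classical
  induction s using Finset.cons_induction with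
  | empty => simp
  | cons a s ha ih => rw [Finset.sum_cons, Finset.prod_cons, Real.rpow_add two_pos, ih]

lemma per_i (r i : ℕ) (hr : 3 ≤ r) (h1 : 1 ≤ i) (h2 : i ≤ r - 1) :
    (r.choose i : ℝ) * Real.logb 2 (1 - (i:ℝ)/r)
      - Real.logb 2 (((r:ℝ) - i)/i) * ((r-1).choose (i-1) : ℝ)
      = -((r.choose i : ℝ) * binEnt ((i:ℝ)/r)) := by
  have hi' : (0:ℝ) < i := by exact_mod_cast h1
  have hr' : (0:ℝ) < r := by exact_mod_cast (by omega : 0 < r)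
  have hirn : i < r := by omega
  have hir : (i:ℝ) < r := by exact_mod_cast hirn
  have hchoose : ((r-1).choose (i-1) : ℝ) * r = (r.choose i : ℝ) * i := by
    have h := Nat.add_one_mul_choose_eq (r-1) (i-1)
    have e1 : r - 1 + 1 = r := by omega
    have e2 : i - 1 + 1 = i := by omega
    rw [e1, e2] at h
    -- h : r * (r-1).choose (i-1) = r.choose i * i
    exact_mod_cast by rw [mul_comm ((r-1).choose (i-1)) r, h]
  have hC : ((r-1).choose (i-1) : ℝ) = (r.choose i : ℝ) * i / r := by
    field_simp
    linarith [hchoose]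
  have h1p : 1 - (i:ℝ)/r = ((r:ℝ) - i)/r := by field_simp
  have e1 : Real.logb 2 (1 - (i:ℝ)/r) = Real.logb 2 ((r:ℝ)-i) - Real.logb 2 r := by
    rw [h1p, Real.logb_div (by linarith) (by linarith)]
  have e2 : Real.logb 2 (((r:ℝ)-i)/i) = Real.logb 2 ((r:ℝ)-i) - Real.logb 2 i :=
    Real.logb_div (by linarith) (by linarith)
  have e3 : Real.logb 2 ((i:ℝ)/r) = Real.logb 2 i - Real.logb 2 r :=
    Real.logb_div (by linarith) (by linarith)
  unfold binEnt
  rw [Real.logb_inv, Real.logb_inv, e1, e2, e3, hC]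
  field_simp
  ring



/-- Shallow cuts of the cube (Proposition on `A(m)`): the matrix `A(m)` is encoded by
`col : Fin M → Fin r → Bool` (`M = (2^r-2)m`), each nonconstant `v ∈ {0,1}^r` appearing
exactly `m` times among the columns; its rows are `sᵢ(j) = col j i`. The inequality
`∑_{i=1}^{r-1} ∑_{j ∈ L(i)} αᵢ ξⱼ ≤ ∑_{i=1}^{r-1} αᵢ σ(i)` (with `L(i)` the columns with
exactly `i` ones and `σ(i) = C(r-1,i-1)·m`) is encoded by attaching to column `j` the
coefficient `α_{ones(col j)}`. For large `m` there are coefficients such that all rows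
satisfy the inequality with equality, while it has at most `2^{(H_r+ε)M}` 0/1-solutions. -/
theorem stmt10 (r : ℕ) (hr : 3 ≤ r) (ε : ℝ) (hε : 0 < ε) :
    ∃ m₀ : ℕ, ∀ m : ℕ, m₀ ≤ m →
      ∀ col : Fin ((2 ^ r - 2) * m) → Fin r → Bool,
        (∀ v : Fin r → Bool, v ≠ (fun _ => false) → v ≠ (fun _ => true) →
          {j : Fin ((2 ^ r - 2) * m) | col j = v}.ncard = m) →
        ∃ a : ℕ → ℝ,
          (∀ i : Fin r,
              ∑ j : Fin ((2 ^ r - 2) * m),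
                  a (ones (col j)) * (if col j i then (1 : ℝ) else 0) =
                ∑ i' ∈ Finset.Icc 1 (r - 1), a i' * (((r - 1).choose (i' - 1) * m : ℕ) : ℝ)) ∧
          ({ξ : Fin ((2 ^ r - 2) * m) → Bool |
              ∑ j : Fin ((2 ^ r - 2) * m),
                  a (ones (col j)) * (if ξ j then (1 : ℝ) else 0) ≤
                ∑ i' ∈ Finset.Icc 1 (r - 1), a i' * (((r - 1).choose (i' - 1) * m : ℕ) : ℝ)}.ncard : ℝ)
            ≤ (2 : ℝ) ^ ((Hent r + ε) * (((2 ^ r - 2) * m : ℕ) : ℝ)) := by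
  classical
  refine ⟨0, fun m _ col hcol => ?_⟩
  have hr0 : 0 < r := by omega
  set c0 : Fin r → Bool := fun _ => false with hc0
  set c1 : Fin r → Bool := fun _ => true with hc1
  set Vnc : Finset (Fin r → Bool) := Finset.univ.filter (fun v => ¬v = c0 ∧ ¬v = c1) with hVnc
  have hc01 : c0 ≠ c1 := by
    intro h
    have := congrFun h ⟨0, hr0⟩
    simp [hc0, hc1] at this
  have h2r : 2 ≤ 2 ^ r := by
    calc 2 ≤ 2 ^ 1 := by norm_num
    _ ≤ 2 ^ r := Nat.pow_le_pow_right (by norm_num) (by omega)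
  -- cardinality of Vnc
  have hcardV : Vnc.card = 2 ^ r - 2 := by
    have : Vnc = Finset.univ \ {c0, c1} := by
      ext v; simp [hVnc]
    rw [this, Finset.card_sdiff_of_subset (Finset.subset_univ _)]
    rw [Finset.card_insert_of_notMem (by simp [hc01]), Finset.card_singleton]
    congr 1
    simp [Finset.card_univ]
  -- fibers of col over nonconstant v have size m
  have hfiber : ∀ v ∈ Vnc, (Finset.univ.filter fun j : Fin ((2 ^ r - 2) * m) => col j = v).card = m := by
    intro v hv
    rw [hVnc, Finset.mem_filter] at hv
    have := hcol v hv.2.1 hv.2.2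
    rwa [Set.ncard_eq_toFinset_card', Set.toFinset_setOf] at this
  -- every column is nonconstant
  have hnc : ∀ j : Fin ((2 ^ r - 2) * m), col j ∈ Vnc := by
    have htot : ∑ v ∈ (Finset.univ : Finset (Fin r → Bool)),
        (Finset.univ.filter fun j : Fin ((2 ^ r - 2) * m) => col j = v).card
        = (2 ^ r - 2) * m := by
      rw [← Finset.card_eq_sum_card_fiberwise (fun j _ => Finset.mem_univ (col j))]
      simp [Finset.card_univ]
    have hVtot : ∑ v ∈ Vnc,
        (Finset.univ.filter fun j : Fin ((2 ^ r - 2) * m) => col j = v).card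
        = (2 ^ r - 2) * m := by
      rw [Finset.sum_congr rfl hfiber, Finset.sum_const, hcardV, smul_eq_mul]
    have hsplit := Finset.sum_filter_add_sum_filter_not (Finset.univ : Finset (Fin r → Bool))
      (fun v => ¬v = c0 ∧ ¬v = c1)
      (fun v => (Finset.univ.filter fun j : Fin ((2 ^ r - 2) * m) => col j = v).card)
    rw [← hVnc] at hsplit
    have hzero : ∑ v ∈ Finset.univ.filter (fun v => ¬(¬v = c0 ∧ ¬v = c1)),
        (Finset.univ.filter fun j : Fin ((2 ^ r - 2) * m) => col j = v).card = 0 := by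
      omega
    intro j
    by_contra hj
    have hjm : (Finset.univ.filter fun j' : Fin ((2 ^ r - 2) * m) => col j' = col j).card = 0 := by
      refine (Finset.sum_eq_zero_iff.mp hzero) (col j) ?_
      rw [Finset.mem_filter]
      refine ⟨Finset.mem_univ _, ?_⟩
      intro hcontra
      exact hj (by rw [hVnc, Finset.mem_filter]; exact ⟨Finset.mem_univ _, hcontra⟩)
    have : j ∈ Finset.univ.filter fun j' : Fin ((2 ^ r - 2) * m) => col j' = col j := by simp
    rw [Finset.card_eq_zero.mp hjm] at this
    simp at this
  -- L1: reduction of sums over columns to sums over nonconstant vectors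
  have L1 : ∀ f : (Fin r → Bool) → ℝ, ∑ j : Fin ((2 ^ r - 2) * m), f (col j) = m * ∑ v ∈ Vnc, f v := by
    intro f
    rw [← Finset.sum_fiberwise_of_maps_to (fun j _ => hnc j) (fun j => f (col j))]
    rw [Finset.mul_sum]
    refine Finset.sum_congr rfl fun v hv => ?_
    rw [Finset.sum_congr rfl (fun j hj => by rw [(Finset.mem_filter.mp hj).2]),
      Finset.sum_const, hfiber v hv, nsmul_eq_mul]
  -- ones of a nonconstant vector lies in [1, r-1]
  have honesV : ∀ v ∈ Vnc, ones v ∈ Finset.Icc 1 (r-1) := by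
    intro v hv
    rw [hVnc, Finset.mem_filter] at hv
    rw [Finset.mem_Icc]
    constructor
    · rcases Nat.eq_zero_or_pos (ones v) with h | h
      · exact absurd ((ones_eq_zero_iff v).mp h) hv.2.1
      · exact h
    · rcases eq_or_lt_of_le (ones_le v) with h | h
      · exact absurd ((ones_eq_top_iff v).mp h) hv.2.2
      · omega
  have hfib_eq : ∀ i' ∈ Finset.Icc 1 (r-1),
      Vnc.filter (fun v => ones v = i') = Finset.univ.filter fun v => ones v = i' := by
    intro i' hi'
    rw [Finset.mem_Icc] at hi'
    ext v
    simp only [Finset.mem_filter, hVnc, Finset.mem_univ, true_and, and_iff_right_iff_imp]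
    intro h
    constructor
    · intro hv
      rw [hv, (ones_eq_zero_iff c0).mpr rfl] at h; omega
    · intro hv
      rw [hv, (ones_eq_top_iff c1).mpr rfl] at h; omega
  have L2 : ∀ F : (Fin r → Bool) → ℝ, ∑ v ∈ Vnc, F v
      = ∑ i' ∈ Finset.Icc 1 (r-1), ∑ v ∈ Finset.univ.filter (fun v => ones v = i'), F v := by
    intro F
    rw [← Finset.sum_fiberwise_of_maps_to honesV F]
    exact Finset.sum_congr rfl fun i' hi' => by rw [hfib_eq i' hi']
  -- the coefficients
  set a : ℕ → ℝ := fun i => Real.logb 2 (((r : ℝ) - i) / i) with ha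
  refine ⟨a, ?_, ?_⟩
  · intro i
    rw [L1 (fun v => a (ones v) * (if v i then (1:ℝ) else 0)), L2]
    rw [Finset.mul_sum]
    refine Finset.sum_congr rfl fun i' hi' => ?_
    rw [Finset.mem_Icc] at hi'
    have hcong : ∀ v ∈ Finset.univ.filter (fun v : Fin r → Bool => ones v = i'),
        a (ones v) * (if v i then (1:ℝ) else 0) = if v i = true then a i' else 0 := by
      intro v hv
      rw [Finset.mem_filter] at hv
      rw [hv.2]
      by_cases h : v i <;> simp [h]
    rw [Finset.sum_congr rfl hcong, ← Finset.sum_filter, Finset.sum_const,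
      Finset.filter_filter, count_ones_true r i' i hi'.1, nsmul_eq_mul]
    push_cast
    ring
  · -- counting bound
    set B : ℝ := ∑ i' ∈ Finset.Icc 1 (r-1), a i' * (((r - 1).choose (i' - 1) * m : ℕ) : ℝ) with hB
    set p : (Fin r → Bool) → ℝ := fun v => (ones v : ℝ) / r with hp
    set w : Fin ((2 ^ r - 2) * m) → Bool → ℝ := fun j b => if b then p (col j) else 1 - p (col j)
      with hw
    have hone_j : ∀ j, 1 ≤ ones (col j) ∧ ones (col j) ≤ r - 1 := fun j =>
      Finset.mem_Icc.mp (honesV _ (hnc j))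
    have hrR : (0:ℝ) < r := by exact_mod_cast hr0
    have hpj : ∀ j, 0 < p (col j) ∧ p (col j) < 1 := by
      intro j
      obtain ⟨h1, h2⟩ := hone_j j
      constructor
      · exact div_pos (by exact_mod_cast h1) hrR
      · rw [div_lt_one hrR]
        exact_mod_cast (by omega : ones (col j) < r)
    have hwnn : ∀ j b, 0 ≤ w j b := by
      intro j b
      obtain ⟨h1, h2⟩ := hpj j
      cases b <;> simp [hw] <;> linarith
    -- total mass 1
    have hq1 : ∑ ξ : Fin ((2 ^ r - 2) * m) → Bool, ∏ j, w j (ξ j) = 1 := by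
      rw [← Fintype.prod_sum w]
      refine Finset.prod_eq_one fun j _ => ?_
      rw [Fintype.sum_bool]
      simp [hw]
    -- log of the constant part
    set Slog : ℝ := ∑ j : Fin ((2 ^ r - 2) * m), Real.logb 2 (1 - p (col j)) with hSlog
    -- product formula
    have hcolid : ∀ j (b : Bool), w j b
        = (1 - p (col j)) * (2:ℝ) ^ (-(a (ones (col j)) * (if b then (1:ℝ) else 0))) := by
      intro j b
      obtain ⟨hp0, hp1⟩ := hpj j
      obtain ⟨h1, h2⟩ := hone_j j
      cases b with
      | false => simp [hw]
      | true =>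
        have hnR : (0:ℝ) < ones (col j) := by exact_mod_cast h1
        have hnr : (ones (col j) : ℝ) < r := by exact_mod_cast (by omega : ones (col j) < r)
        have hx : (0:ℝ) < ((r:ℝ) - (ones (col j)))/(ones (col j)) :=
          div_pos (by linarith) hnR
        show p (col j) = (1 - p (col j)) * (2:ℝ) ^ (-(a (ones (col j)) * 1))
        have hd : (r:ℝ) - (ones (col j)) ≠ 0 := by linarith
        rw [mul_one, ha, Real.rpow_neg two_pos.le,
          Real.rpow_logb two_pos (by norm_num) hx]
        simp only [hp]
        rw [inv_div, one_sub_div hrR.ne', div_mul_div_comm,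
          mul_comm (r:ℝ) ((r:ℝ) - (ones (col j))),
          mul_div_mul_left _ _ hd]
    have hprod : ∀ ξ : Fin ((2 ^ r - 2) * m) → Bool, ∏ j, w j (ξ j)
        = (2:ℝ) ^ (Slog - ∑ j, a (ones (col j)) * (if ξ j then (1:ℝ) else 0)) := by
      intro ξ
      calc ∏ j, w j (ξ j)
          = ∏ j, ((1 - p (col j))
            * (2:ℝ) ^ (-(a (ones (col j)) * (if ξ j then (1:ℝ) else 0)))) :=
            Finset.prod_congr rfl fun j _ => hcolid j (ξ j)
        _ = (∏ j, (1 - p (col j)))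
            * ∏ j, (2:ℝ) ^ (-(a (ones (col j)) * (if ξ j then (1:ℝ) else 0))) :=
            Finset.prod_mul_distrib
        _ = (2:ℝ) ^ Slog
            * (2:ℝ) ^ (-∑ j, a (ones (col j)) * (if ξ j then (1:ℝ) else 0)) := by
            rw [hSlog, rpow_finset_sum, ← Finset.sum_neg_distrib, rpow_finset_sum]
            congr 1
            refine Finset.prod_congr rfl fun j _ => ?_
            rw [Real.rpow_logb two_pos (by norm_num) (by linarith [(hpj j).2])]
        _ = (2:ℝ) ^ (Slog - ∑ j, a (ones (col j)) * (if ξ j then (1:ℝ) else 0)) := by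
            rw [← Real.rpow_add two_pos, sub_eq_add_neg]
    -- the exponent identity
    have hMcast : (((2 ^ r - 2) * m : ℕ) : ℝ) = ((2:ℝ)^r - 2) * m := by
      rw [Nat.cast_mul, Nat.cast_sub h2r, Nat.cast_pow]
      norm_num
    have h2ne : ((2:ℝ)^r - 2) ≠ 0 := by
      have : (2:ℝ)^3 ≤ (2:ℝ)^r := pow_le_pow_right₀ one_le_two hr
      norm_num at this ⊢
      nlinarith
    have hSeq : Slog = m * ∑ i' ∈ Finset.Icc 1 (r-1),
        (r.choose i' : ℝ) * Real.logb 2 (1 - (i':ℝ)/r) := by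
      rw [hSlog, L1 (fun v => Real.logb 2 (1 - p v)), L2]
      congr 1
      refine Finset.sum_congr rfl fun i' hi' => ?_
      have : ∀ v ∈ Finset.univ.filter (fun v : Fin r → Bool => ones v = i'),
          Real.logb 2 (1 - p v) = Real.logb 2 (1 - (i':ℝ)/r) := by
        intro v hv
        have hv2 := (Finset.mem_filter.mp hv).2
        simp only [hp]
        rw [hv2]
      rw [Finset.sum_congr rfl this, Finset.sum_const, count_ones, nsmul_eq_mul]
    have hBeq : B = m * ∑ i' ∈ Finset.Icc 1 (r-1),
        Real.logb 2 (((r:ℝ) - i')/i') * ((r-1).choose (i'-1) : ℝ) := by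
      rw [hB, Finset.mul_sum]
      refine Finset.sum_congr rfl fun i' _ => ?_
      rw [ha]
      push_cast
      ring
    have hHM : Hent r * (((2 ^ r - 2) * m : ℕ) : ℝ)
        = m * ∑ i' ∈ Finset.Icc 1 (r-1), (r.choose i' : ℝ) * binEnt ((i':ℝ)/r) := by
      rw [hMcast, Hent]
      field_simp
    have hSB : Slog - B = -(Hent r * (((2 ^ r - 2) * m : ℕ) : ℝ)) := by
      rw [hSeq, hBeq, hHM, ← mul_sub, ← Finset.sum_sub_distrib, ← mul_neg,
        ← Finset.sum_neg_distrib]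
      congr 1
      refine Finset.sum_congr rfl fun i' hi' => ?_
      rw [Finset.mem_Icc] at hi'
      exact per_i r i' hr hi'.1 hi'.2
    -- assemble
    set Sol : Finset (Fin ((2 ^ r - 2) * m) → Bool) := Finset.univ.filter
      (fun ξ => ∑ j, a (ones (col j)) * (if ξ j then (1:ℝ) else 0) ≤ B) with hSolDef
    have hset : {ξ : Fin ((2 ^ r - 2) * m) → Bool |
        ∑ j, a (ones (col j)) * (if ξ j then (1:ℝ) else 0) ≤ B} = ↑Sol := by
      ext ξ
      simp [hSolDef]
    rw [hset, Set.ncard_coe_finset]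
    have hlow : ∀ ξ ∈ Sol, (2:ℝ) ^ (-(Hent r * (((2 ^ r - 2) * m : ℕ) : ℝ)))
        ≤ ∏ j, w j (ξ j) := by
      intro ξ hξ
      rw [hSolDef, Finset.mem_filter] at hξ
      rw [hprod ξ, ← hSB]
      exact Real.rpow_le_rpow_of_exponent_le one_le_two (by linarith [hξ.2])
    have h1 : (Sol.card : ℝ) * (2:ℝ) ^ (-(Hent r * (((2 ^ r - 2) * m : ℕ) : ℝ)))
        ≤ ∑ ξ ∈ Sol, ∏ j, w j (ξ j) := by
      rw [← nsmul_eq_mul]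
      exact Finset.card_nsmul_le_sum Sol _ _ hlow
    have h2 : ∑ ξ ∈ Sol, ∏ j, w j (ξ j) ≤ 1 := by
      rw [← hq1]
      exact Finset.sum_le_sum_of_subset_of_nonneg (Finset.subset_univ _)
        (fun ξ _ _ => Finset.prod_nonneg fun j _ => hwnn j (ξ j))
    have hpos : (0:ℝ) < (2:ℝ) ^ (Hent r * (((2 ^ r - 2) * m : ℕ) : ℝ)) :=
      Real.rpow_pos_of_pos two_pos _
    have h3 : (Sol.card : ℝ) ≤ (2:ℝ) ^ (Hent r * (((2 ^ r - 2) * m : ℕ) : ℝ)) := by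
      rw [← div_le_one hpos]
      rw [div_eq_mul_inv, ← Real.rpow_neg two_pos.le]
      exact h1.trans h2
    refine h3.trans (Real.rpow_le_rpow_of_exponent_le one_le_two ?_)
    have : (0:ℝ) ≤ (((2 ^ r - 2) * m : ℕ) : ℝ) := Nat.cast_nonneg _
    nlinarith
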